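/- Every minimal non-sofic group is finitely generated; in particular, every proper subgroup of a minimal non-sofic group is contained in a maximal (proper) subgroup. -/

import Mathlib

/-- The normalized Hamming distance between two permutations of `Fin n`:
the number of points where they differ, divided by `n`. -/
noncomputable def permHammingDist {n : ℕ} (σ τ : Equiv.Perm (Fin n)) : ℝ :=
  ((Finset.univ.filter fun i => σ i ≠ τ i).card : ℝ) / n

/-- A group `G` is sofic if for every finite subset `F ⊆ G` and every `ε > 0` there exist
`n ≥ 1` and a map `θ` from `F` to `Sym(Fin n)` (extended to all of `G`) such that:
(i) `θ` is an `ε`-approximate homomorphism on `F`;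
(ii) `θ` almost sends the identity to the identity;
(iii) distinct elements of `F` are sent to permutations at Hamming distance at least `1/4`. -/
def IsSofic (G : Type*) [Group G] : Prop :=
  ∀ (F : Finset G) (ε : ℝ), 0 < ε →
    ∃ n : ℕ, 1 ≤ n ∧ ∃ θ : G → Equiv.Perm (Fin n),
      (∀ g h : G, g ∈ F → h ∈ F → g * h ∈ F →
        permHammingDist (θ g * θ h) (θ (g * h)) < ε) ∧
      ((1 : G) ∈ F → permHammingDist (θ 1) 1 < ε) ∧
      (∀ x y : G, x ∈ F → y ∈ F → x ≠ y → 1 / 4 ≤ permHammingDist (θ x) (θ y))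

/-- A group is minimal non-sofic if it is not sofic but every proper subgroup is sofic. -/
def IsMinimalNonSofic (G : Type*) [Group G] : Prop :=
  ¬ IsSofic G ∧ ∀ H : Subgroup G, H ≠ ⊤ → IsSofic H

/-- If every finite subset of `G` is contained in a sofic subgroup, then `G` is sofic. -/
lemma isSofic_of_locally (G : Type*) [Group G]
    (h : ∀ F : Finset G, ∃ H : Subgroup G, (↑F : Set G) ⊆ H ∧ IsSofic H) : IsSofic G := by
  classical
  intro F ε hε
  obtain ⟨H, hFH, hH⟩ := h F
  -- transfer F into H
  set F' : Finset H := F.attach.image (fun x => (⟨x.1, hFH x.2⟩ : H)) with hF'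
  have memF' : ∀ (g : G) (hg : g ∈ F), (⟨g, hFH hg⟩ : H) ∈ F' := by
    intro g hg
    simp only [hF', Finset.mem_image]
    exact ⟨⟨g, hg⟩, Finset.mem_attach _ _, rfl⟩
  obtain ⟨n, hn, θ', h1, h2, h3⟩ := hH F' ε hε
  refine ⟨n, hn, fun g => if hg : g ∈ H then θ' ⟨g, hg⟩ else 1, ?_, ?_, ?_⟩
  · intro g h hg hh hgh
    have hgH : g ∈ H := hFH hg
    have hhH : h ∈ H := hFH hh
    have hghH : g * h ∈ H := hFH hgh
    simp only [dif_pos hgH, dif_pos hhH, dif_pos hghH]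
    have := h1 ⟨g, hgH⟩ ⟨h, hhH⟩ (memF' g hg) (memF' h hh) ?_
    · convert this using 3
      rfl
    · have : (⟨g, hgH⟩ : H) * ⟨h, hhH⟩ = ⟨g * h, hghH⟩ := rfl
      rw [this]; exact memF' _ hgh
  · intro h1mem
    have h1H : (1 : G) ∈ H := hFH h1mem
    simp only [dif_pos h1H]
    have : (⟨(1 : G), h1H⟩ : H) = 1 := rfl
    rw [this]
    exact h2 (this ▸ memF' 1 h1mem)
  · intro x y hx hy hxy
    have hxH : x ∈ H := hFH hx
    have hyH : y ∈ H := hFH hy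
    simp only [dif_pos hxH, dif_pos hyH]
    exact h3 ⟨x, hxH⟩ ⟨y, hyH⟩ (memF' x hx) (memF' y hy)
      (fun he => hxy (congrArg Subtype.val he))

theorem minimalNonSofic_fg (G : Type*) [Group G] (hG : IsMinimalNonSofic G) :
    Group.FG G ∧
      ∀ H : Subgroup G, H ≠ ⊤ → ∃ M : Subgroup G, IsCoatom M ∧ H ≤ M := by
  obtain ⟨hns, hsub⟩ := hG
  have hfg : Group.FG G := by
    by_contra hnfg
    apply hns
    apply isSofic_of_locally
    intro F
    refine ⟨Subgroup.closure ↑F, Subgroup.subset_closure, hsub _ ?_⟩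
    intro htop
    exact hnfg ⟨⟨F, htop⟩⟩
  refine ⟨hfg, fun H hH => ?_⟩
  -- Zorn's lemma: the set of proper subgroups containing H has a maximal element.
  obtain ⟨S, hScl, hSfin⟩ := Group.fg_iff.mp hfg
  have hchain : ∀ c ⊆ {K : Subgroup G | K ≠ ⊤}, IsChain (· ≤ ·) c →
    ∀ y ∈ c, ∃ ub ∈ {K : Subgroup G | K ≠ ⊤}, ∀ z ∈ c, z ≤ ub := by
    intro c hcs hc y hy
    refine ⟨sSup c, ?_, fun z hz => le_sSup hz⟩
    intro htop
    -- every generator lies in some member of the chain; the chain is directed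
    have hdir : DirectedOn (· ≤ ·) c := hc.directedOn
    have hmem : ∀ s ∈ hSfin.toFinset, ∃ K ∈ c, s ∈ K := by
      intro s hs
      have : s ∈ sSup c := htop ▸ Subgroup.mem_top s
      exact (Subgroup.mem_sSup_of_directedOn ⟨y, hy⟩ hdir).mp this
    -- find a common upper bound in the chain for the finitely many generators
    have key : ∀ (T : Finset G), (∀ s ∈ T, ∃ K ∈ c, s ∈ K) → ∃ K ∈ c, ∀ s ∈ T, s ∈ K := by
      classical
      intro T
      induction T using Finset.induction_on with
      | empty => exact fun _ => ⟨y, hy, by simp⟩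
      | @insert a T ha ih =>
        intro hT
        obtain ⟨K, hKc, hKmem⟩ := ih fun s hs => hT s (Finset.mem_insert_of_mem hs)
        obtain ⟨L, hLc, hLa⟩ := hT a (Finset.mem_insert_self a T)
        obtain ⟨N, hNc, hKN, hLN⟩ := hdir K hKc L hLc
        refine ⟨N, hNc, fun s hs => ?_⟩
        rcases Finset.mem_insert.mp hs with rfl | hs
        · exact hLN hLa
        · exact hKN (hKmem s hs)
    obtain ⟨K, hKc, hK⟩ := key hSfin.toFinset hmem
    apply hcs hKc
    rw [eq_top_iff, ← hScl]
    refine (Subgroup.closure_le K).mpr fun s hs => hK s (hSfin.mem_toFinset.mpr hs)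

  obtain ⟨M, hHM, hM⟩ := zorn_le_nonempty₀ {K : Subgroup G | K ≠ ⊤} hchain H hH
  refine ⟨M, ⟨hM.1, fun b hb => ?_⟩, hHM⟩
  by_contra hbtop
  exact absurd (hM.2 hbtop hb.le) hb.not_ge
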